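/- For every positive integer k, every finite graph G with degeneracy at least 12k, and every tournament T on the same vertex set, there exist vertices x and y such that the subgraph of G induced on the out-neighbourhood N⁺_T({x,y}) has degeneracy at least k − 1. -/

import Mathlib

open scoped Classical

/-- A tournament on `V`: an orientation of the complete graph, i.e. an irreflexive
relation such that for distinct vertices exactly one direction is present. -/
def IsTournament {V : Type*} (r : V → V → Prop) : Prop :=
  (∀ v, ¬ r v v) ∧ ∀ u v : V, u ≠ v → (r u v ↔ ¬ r v u)

/-- The degeneracy of a finite graph: the least `d` such that every nonempty
(induced) subgraph has a vertex of degree at most `d`. -/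
noncomputable def degeneracy {V : Type*} [Fintype V] (G : SimpleGraph V) : ℕ :=
  sInf {d : ℕ | ∀ W : Finset V, W.Nonempty →
    ∃ v ∈ W, (W.filter fun u => G.Adj v u).card ≤ d}

lemma sparse_sum {V : Type*} [Fintype V] (G : SimpleGraph V) (j : ℕ) :
    ∀ A : Finset V,
      (∀ Q ⊆ A, Q.Nonempty → ∃ v ∈ Q, (Q.filter fun u => G.Adj v u).card ≤ j) →
      ∑ v ∈ A, (A.filter fun u => G.Adj v u).card ≤ 2 * j * A.card := by
  intro A
  induction A using Finset.strongInduction with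
  | _ A ih =>
    intro hA
    rcases A.eq_empty_or_nonempty with rfl | hne
    · simp
    obtain ⟨v, hv, hdv⟩ := hA A Finset.Subset.rfl hne
    have hss : A.erase v ⊂ A := Finset.erase_ssubset hv
    have hrec := ih (A.erase v) hss (fun Q hQ hQne => hA Q (hQ.trans hss.subset) hQne)
    have hAv : (A.filter fun u => G.Adj v u) = ((A.erase v).filter fun u => G.Adj v u) := by
      rw [Finset.filter_erase, Finset.erase_eq_of_notMem]
      simp [G.irrefl]
    have hsplit : ∑ u ∈ A, (A.filter fun w => G.Adj u w).card
        = (A.filter fun w => G.Adj v w).card + ∑ u ∈ A.erase v, (A.filter fun w => G.Adj u w).card :=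
      (Finset.add_sum_erase A _ hv).symm
    have hpt : ∀ u ∈ A.erase v, (A.filter fun w => G.Adj u w).card
        = ((A.erase v).filter fun w => G.Adj u w).card + (if G.Adj u v then 1 else 0) := by
      intro u hu
      conv_lhs => rw [← Finset.insert_erase hv]
      rw [Finset.filter_insert]
      by_cases h : G.Adj u v
      · rw [if_pos h, Finset.card_insert_of_notMem (by simp), if_pos h]
      · rw [if_neg h, if_neg h, add_zero]
    have hsum2 : ∑ u ∈ A.erase v, (A.filter fun w => G.Adj u w).card
        = ∑ u ∈ A.erase v, ((A.erase v).filter fun w => G.Adj u w).card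
          + ((A.erase v).filter fun u => G.Adj u v).card := by
      rw [Finset.sum_congr rfl hpt, Finset.sum_add_distrib, Finset.card_filter]
    have hsym : ((A.erase v).filter fun u => G.Adj u v).card
        = ((A.erase v).filter fun u => G.Adj v u).card := by
      congr 1
      apply Finset.filter_congr
      intro u _
      simp [G.adj_comm]
    have h1 : ((A.erase v).filter fun u => G.Adj v u).card ≤ j := by
      rw [← hAv]; exact hdv
    have h2 : (A.filter fun w => G.Adj v w).card ≤ j := hdv
    have hc : (A.erase v).card = A.card - 1 := Finset.card_erase_of_mem hv
    have hApos : 1 ≤ A.card := Finset.card_pos.2 hne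
    -- combine
    have hfin : ∑ u ∈ A, (A.filter fun w => G.Adj u w).card
        ≤ 2 * j * (A.erase v).card + 2 * j := by omega
    have hc2 : (A.erase v).card + 1 = A.card := by omega
    calc ∑ u ∈ A, (A.filter fun w => G.Adj u w).card
        ≤ 2 * j * (A.erase v).card + 2 * j := hfin
      _ = 2 * j * ((A.erase v).card + 1) := by ring
      _ = 2 * j * A.card := by rw [hc2]

lemma tourn_sum {V : Type*} [Fintype V] (r : V → V → Prop) (hr : IsTournament r)
    (W : Finset V) :
    2 * ∑ v ∈ W, (W.filter fun u => r v u).card = W.card * (W.card - 1) := by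
  have h1 : ∀ s : Finset V, (∑ v ∈ W, (W.filter fun u => r v u).card)
      = ∑ v ∈ W, ∑ u ∈ W, if r v u then 1 else 0 := by
    intro _; exact Finset.sum_congr rfl fun v _ => Finset.card_filter _ _
  rw [h1 W]
  have hswap : ∑ v ∈ W, ∑ u ∈ W, (if r v u then (1:ℕ) else 0)
      = ∑ v ∈ W, ∑ u ∈ W, (if r u v then (1:ℕ) else 0) := Finset.sum_comm
  have e2 : ∀ v ∈ W, ∑ u ∈ W, ((if r v u then (1:ℕ) else 0) + (if r u v then 1 else 0))
      = W.card - 1 := by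
    intro v hv
    have hpt : ∀ u ∈ W, ((if r v u then (1:ℕ) else 0) + (if r u v then 1 else 0))
        = if u = v then 0 else 1 := by
      intro u _
      by_cases huv : u = v
      · simp [huv, hr.1 v]
      · have h := hr.2 v u (fun h => huv h.symm)
        by_cases h2 : r v u
        · simp [h2, h.1 h2, huv]
        · have h3 : r u v := by
            by_contra h3
            exact h2 (h.2 h3)
          simp [h2, h3, huv]
    rw [Finset.sum_congr rfl hpt]
    have hb : ∑ u ∈ W, ((if u = v then (0:ℕ) else 1) + (if u = v then 1 else 0)) = W.card := by
      have hb0 : ∀ u ∈ W, ((if u = v then (0:ℕ) else 1) + (if u = v then 1 else 0)) = 1 :=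
        fun u _ => by by_cases h : u = v <;> simp [h]
      rw [Finset.sum_congr rfl hb0]
      simp
    rw [Finset.sum_add_distrib] at hb
    have hone : ∑ u ∈ W, (if u = v then (1:ℕ) else 0) = 1 := by
      rw [Finset.sum_ite_eq' W v (fun _ => 1), if_pos hv]
    omega
  calc 2 * ∑ v ∈ W, ∑ u ∈ W, (if r v u then (1:ℕ) else 0)
      = (∑ v ∈ W, ∑ u ∈ W, (if r v u then (1:ℕ) else 0))
        + ∑ v ∈ W, ∑ u ∈ W, (if r u v then (1:ℕ) else 0) := by rw [← hswap]; ring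
    _ = ∑ v ∈ W, ∑ u ∈ W, ((if r v u then (1:ℕ) else 0) + (if r u v then 1 else 0)) := by
        rw [← Finset.sum_add_distrib]
        exact Finset.sum_congr rfl fun v _ => by rw [← Finset.sum_add_distrib]
    _ = ∑ v ∈ W, (W.card - 1) := Finset.sum_congr rfl e2
    _ = W.card * (W.card - 1) := by rw [Finset.sum_const, smul_eq_mul]

lemma king_sum {V : Type*} (r : V → V → Prop) (hr : IsTournament r)
    (B : Finset V) (w : V → ℕ) :
    2 * (∑ y ∈ B, w y * ∑ u ∈ B.filter (fun u => r y u), w u) + ∑ y ∈ B, w y * w y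
      = (∑ y ∈ B, w y) * (∑ y ∈ B, w y) := by
  have hrhs : (∑ y ∈ B, w y) * (∑ y ∈ B, w y) = ∑ y ∈ B, ∑ u ∈ B, w y * w u := by
    rw [Finset.sum_mul_sum]
  have hpt : ∀ y ∈ B, ∀ u ∈ B, w y * w u
      = (if r y u then w y * w u else 0) + (if r u y then w y * w u else 0)
        + (if u = y then w y * w u else 0) := by
    intro y _ u _
    by_cases huy : u = y
    · simp [huy, hr.1 y]
    · have h := hr.2 y u (fun h => huy h.symm)
      by_cases h2 : r y u
      · simp [h2, h.1 h2, huy]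
      · have h3 : r u y := by by_contra h3; exact h2 (h.2 h3)
        simp [h2, h3, huy]
  have hsplit : ∑ y ∈ B, ∑ u ∈ B, w y * w u
      = (∑ y ∈ B, ∑ u ∈ B, if r y u then w y * w u else 0)
        + (∑ y ∈ B, ∑ u ∈ B, if r u y then w y * w u else 0)
        + (∑ y ∈ B, ∑ u ∈ B, if u = y then w y * w u else 0) := by
    rw [← Finset.sum_add_distrib, ← Finset.sum_add_distrib]
    refine Finset.sum_congr rfl fun y hy => ?_
    rw [← Finset.sum_add_distrib, ← Finset.sum_add_distrib]
    exact Finset.sum_congr rfl fun u hu => hpt y hy u hu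
  have hT1 : ∑ y ∈ B, ∑ u ∈ B, (if r y u then w y * w u else 0)
      = ∑ y ∈ B, w y * ∑ u ∈ B.filter (fun u => r y u), w u := by
    refine Finset.sum_congr rfl fun y _ => ?_
    rw [Finset.mul_sum, Finset.sum_filter]
    try (refine Finset.sum_congr rfl fun u _ => ?_; by_cases h : r y u <;> simp [h])
  have hT2 : ∑ y ∈ B, ∑ u ∈ B, (if r u y then w y * w u else 0)
      = ∑ y ∈ B, ∑ u ∈ B, (if r y u then w y * w u else 0) := by
    rw [Finset.sum_comm]
    refine Finset.sum_congr rfl fun y _ => Finset.sum_congr rfl fun u _ => ?_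
    by_cases h : r y u <;> simp [h, mul_comm]
  have hT3 : ∑ y ∈ B, ∑ u ∈ B, (if u = y then w y * w u else 0) = ∑ y ∈ B, w y * w y := by
    refine Finset.sum_congr rfl fun y hy => ?_
    rw [Finset.sum_ite_eq' B y (fun u => w y * w u), if_pos hy]
  rw [hrhs, hsplit, hT1, hT2, hT1, hT3]
  ring

lemma king_exists {V : Type*} (r : V → V → Prop) (hr : IsTournament r)
    (B : Finset V) (w : V → ℕ) (hpos : 1 ≤ ∑ y ∈ B, w y) :
    ∃ y ∈ B, ∑ u ∈ B, w u ≤ 2 * ((∑ u ∈ B.filter (fun u => r y u), w u) + w y) := by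
  by_contra hc
  push_neg at hc
  set wB := ∑ y ∈ B, w y with hwB
  have hb : ∀ y ∈ B, w y * (2 * ((∑ u ∈ B.filter (fun u => r y u), w u) + w y)) ≤ w y * (wB - 1) :=
    fun y hy => Nat.mul_le_mul_left _ (by have := hc y hy; omega)
  have hs : ∑ y ∈ B, w y * (2 * ((∑ u ∈ B.filter (fun u => r y u), w u) + w y))
      ≤ ∑ y ∈ B, w y * (wB - 1) := Finset.sum_le_sum hb
  have hl : wB * wB ≤ ∑ y ∈ B, w y * (2 * ((∑ u ∈ B.filter (fun u => r y u), w u) + w y)) := by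
    have hid := king_sum r hr B w
    calc wB * wB = 2 * (∑ y ∈ B, w y * ∑ u ∈ B.filter (fun u => r y u), w u)
          + ∑ y ∈ B, w y * w y := by rw [hid]
      _ = ∑ y ∈ B, (2 * (w y * ∑ u ∈ B.filter (fun u => r y u), w u) + w y * w y) := by
          rw [Finset.sum_add_distrib, Finset.mul_sum]
      _ ≤ ∑ y ∈ B, w y * (2 * ((∑ u ∈ B.filter (fun u => r y u), w u) + w y)) := by
          refine Finset.sum_le_sum fun y _ => ?_
          nlinarith [Nat.zero_le (w y)]
  have hr2 : ∑ y ∈ B, w y * (wB - 1) = wB * (wB - 1) := by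
    rw [← Finset.sum_mul]
  have : wB * wB ≤ wB * (wB - 1) := by
    calc wB * wB ≤ _ := hl
      _ ≤ _ := hs
      _ = wB * (wB - 1) := hr2
  have hlt : wB * (wB - 1) < wB * wB :=
    mul_lt_mul_of_pos_left (by omega : wB - 1 < wB) (by omega : 0 < wB)
  omega

lemma core {V : Type*} [Fintype V] (j : ℕ) (G : SimpleGraph V) (r : V → V → Prop)
    (hr : IsTournament r) (W : Finset V) (hWne : W.Nonempty)
    (hW : ∀ v ∈ W, 12 * (j + 2) ≤ (W.filter fun u => G.Adj v u).card) :
    ∃ x y : V, ∃ P : Finset V, P.Nonempty ∧ (∀ v ∈ P, r x v ∨ r y v) ∧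
      ∀ v ∈ P, j + 1 ≤ (P.filter fun u => G.Adj v u).card := by
  -- W is large
  have hn : 25 ≤ W.card := by
    obtain ⟨v0, hv0⟩ := hWne
    have h1 := hW v0 hv0
    have h2 : (W.filter fun u => G.Adj v0 u).card ≤ (W.erase v0).card := by
      apply Finset.card_le_card
      intro u hu
      rcases Finset.mem_filter.1 hu with ⟨huW, hadj⟩
      exact Finset.mem_erase.2 ⟨fun h => G.irrefl (h ▸ hadj), huW⟩
    have h3 : (W.erase v0).card = W.card - 1 := Finset.card_erase_of_mem hv0
    omega
  -- choose x of max out-degree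
  obtain ⟨x, hxW, hxmax⟩ := Finset.exists_max_image W (fun v => (W.filter fun u => r v u).card) hWne
  set A := W.filter (fun u => r x u) with hAdef
  have hAW : A ⊆ W.erase x := by
    intro u hu
    rcases Finset.mem_filter.1 hu with ⟨huW, hru⟩
    exact Finset.mem_erase.2 ⟨fun h => hr.1 x (h ▸ hru), huW⟩
  set B := (W.erase x) \ A with hBdef
  have hBcard : B.card = (W.card - 1) - A.card := by
    rw [hBdef, Finset.card_sdiff_of_subset hAW, Finset.card_erase_of_mem hxW]
  have h2A : W.card - 1 ≤ 2 * A.card := by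
    have hsle : ∑ v ∈ W, (W.filter fun u => r v u).card ≤ W.card * A.card := by
      calc ∑ v ∈ W, (W.filter fun u => r v u).card
          ≤ ∑ _v ∈ W, A.card := Finset.sum_le_sum (fun v hv => hxmax v hv)
        _ = W.card * A.card := by rw [Finset.sum_const, smul_eq_mul]
    have hts := tourn_sum r hr W
    have : W.card * (W.card - 1) ≤ W.card * (2 * A.card) := by
      calc W.card * (W.card - 1) = 2 * ∑ v ∈ W, (W.filter fun u => r v u).card := hts.symm
        _ ≤ 2 * (W.card * A.card) := by omega
        _ = W.card * (2 * A.card) := by ring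
    exact Nat.le_of_mul_le_mul_left this (by omega)
  have hBA : B.card ≤ A.card := by omega
  have hApos : 1 ≤ A.card := by omega
  -- Case 1 : a dense subset inside A
  by_cases hPA : ∃ P, P ⊆ A ∧ P.Nonempty ∧ ∀ v ∈ P, j + 1 ≤ (P.filter fun u => G.Adj v u).card
  · obtain ⟨P, hPA, hPne, hPd⟩ := hPA
    exact ⟨x, x, P, hPne, fun v hv => Or.inl (Finset.mem_filter.1 (hPA hv)).2, hPd⟩
  push_neg at hPA
  have hAsp : ∑ v ∈ A, (A.filter fun u => G.Adj v u).card ≤ 2 * j * A.card := by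
    apply sparse_sum G j A
    intro Q hQ hQne
    obtain ⟨v, hv, hlt⟩ := hPA Q hQ hQne
    exact ⟨v, hv, by omega⟩
  -- edges from A to B
  have hw : ∀ a ∈ A, 12 * (j + 2)
      ≤ (A.filter fun u => G.Adj a u).card + (B.filter fun u => G.Adj a u).card + 1 := by
    intro a ha
    have h1 := hW a (Finset.mem_filter.1 ha).1
    have h2 : W.filter (fun u => G.Adj a u)
        ⊆ insert x ((A.filter fun u => G.Adj a u) ∪ (B.filter fun u => G.Adj a u)) := by
      intro u hu
      rcases Finset.mem_filter.1 hu with ⟨huW, hadj⟩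
      by_cases hux : u = x
      · exact Finset.mem_insert.2 (Or.inl hux)
      · by_cases huA : u ∈ A
        · exact Finset.mem_insert.2 (Or.inr (Finset.mem_union.2 (Or.inl (Finset.mem_filter.2 ⟨huA, hadj⟩))))
        · refine Finset.mem_insert.2 (Or.inr (Finset.mem_union.2 (Or.inr (Finset.mem_filter.2 ⟨?_, hadj⟩))))
          exact Finset.mem_sdiff.2 ⟨Finset.mem_erase.2 ⟨hux, huW⟩, huA⟩
    have h3 := Finset.card_le_card h2
    have h4 := Finset.card_insert_le x ((A.filter fun u => G.Adj a u) ∪ (B.filter fun u => G.Adj a u))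
    have h5 := Finset.card_union_le (A.filter fun u => G.Adj a u) (B.filter fun u => G.Adj a u)
    omega
  have hAB : ∑ a ∈ A, (B.filter fun u => G.Adj a u).card
      = ∑ b ∈ B, (A.filter fun u => G.Adj b u).card := by
    have e1 : ∑ a ∈ A, (B.filter fun u => G.Adj a u).card
        = ∑ a ∈ A, ∑ u ∈ B, (if G.Adj a u then 1 else 0) :=
      Finset.sum_congr rfl fun a _ => Finset.card_filter _ _
    have e2 : ∑ b ∈ B, (A.filter fun u => G.Adj b u).card
        = ∑ b ∈ B, ∑ u ∈ A, (if G.Adj b u then 1 else 0) :=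
      Finset.sum_congr rfl fun b _ => Finset.card_filter _ _
    rw [e1, e2, Finset.sum_comm]
    exact Finset.sum_congr rfl fun b _ => Finset.sum_congr rfl fun a _ => by
      rw [G.adj_comm]
  have hq : (10 * j + 23) * A.card ≤ ∑ b ∈ B, (A.filter fun u => G.Adj b u).card := by
    have hs : A.card * (12 * (j + 2))
        ≤ (∑ a ∈ A, (A.filter fun u => G.Adj a u).card)
          + (∑ a ∈ A, (B.filter fun u => G.Adj a u).card) + A.card := by
      calc A.card * (12 * (j + 2)) = ∑ _a ∈ A, 12 * (j + 2) := by
            rw [Finset.sum_const, smul_eq_mul]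
        _ ≤ ∑ a ∈ A, ((A.filter fun u => G.Adj a u).card + (B.filter fun u => G.Adj a u).card + 1) :=
            Finset.sum_le_sum hw
        _ = _ := by rw [Finset.sum_add_distrib, Finset.sum_add_distrib, Finset.sum_const, smul_eq_mul, mul_one]
    rw [hAB] at hs
    have hid : A.card * (12 * (j + 2)) = 2 * j * A.card + A.card + (10 * j + 23) * A.card := by ring
    rw [hid] at hs
    omega
  have hwBpos : 1 ≤ ∑ b ∈ B, (A.filter fun u => G.Adj b u).card := by
    have h0 : 1 ≤ (10 * j + 23) * A.card := Nat.one_le_iff_ne_zero.2 (by positivity)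
    omega
  obtain ⟨y, hyB, hking⟩ :=
    king_exists r hr B (fun b => (A.filter fun u => G.Adj b u).card) hwBpos
  -- (beta reduced already)
  set C := B.filter (fun u => r y u) with hCdef
  -- Case 2 : a dense subset inside A ∪ C
  by_cases hPC : ∃ P, P ⊆ A ∪ C ∧ P.Nonempty ∧ ∀ v ∈ P, j + 1 ≤ (P.filter fun u => G.Adj v u).card
  · obtain ⟨P, hPC, hPne, hPd⟩ := hPC
    refine ⟨x, y, P, hPne, fun v hv => ?_, hPd⟩
    rcases Finset.mem_union.1 (hPC hv) with h | h
    · exact Or.inl (Finset.mem_filter.1 h).2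
    · exact Or.inr (Finset.mem_filter.1 h).2
  exfalso
  push_neg at hPC
  have hACsp : ∑ v ∈ A ∪ C, ((A ∪ C).filter fun u => G.Adj v u).card ≤ 2 * j * (A ∪ C).card := by
    apply sparse_sum G j (A ∪ C)
    intro Q hQ hQne
    obtain ⟨v, hv, hlt⟩ := hPC Q hQ hQne
    exact ⟨v, hv, by omega⟩
  have hCcard : C.card ≤ B.card := Finset.card_le_card (Finset.filter_subset _ _)
  have hlow : ∑ u ∈ C, (A.filter fun z => G.Adj u z).card
      ≤ ∑ v ∈ A ∪ C, ((A ∪ C).filter fun u => G.Adj v u).card := by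
    calc ∑ u ∈ C, (A.filter fun z => G.Adj u z).card
        ≤ ∑ u ∈ C, ((A ∪ C).filter fun z => G.Adj u z).card := by
          refine Finset.sum_le_sum fun u _ => ?_
          exact Finset.card_le_card (Finset.filter_subset_filter _ Finset.subset_union_left)
      _ ≤ ∑ v ∈ A ∪ C, ((A ∪ C).filter fun u => G.Adj v u).card :=
          Finset.sum_le_sum_of_subset Finset.subset_union_right
  have hunion : (A ∪ C).card ≤ 2 * A.card := by
    have := Finset.card_union_le A C
    omega
  have hwy : (A.filter fun u => G.Adj y u).card ≤ A.card :=
    Finset.card_le_card (Finset.filter_subset _ _)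
  have hCup : ∑ u ∈ C, (A.filter fun z => G.Adj u z).card ≤ 4 * j * A.card := by
    calc ∑ u ∈ C, (A.filter fun z => G.Adj u z).card
        ≤ 2 * j * (A ∪ C).card := le_trans hlow hACsp
      _ ≤ 2 * j * (2 * A.card) := Nat.mul_le_mul_left _ hunion
      _ = 4 * j * A.card := by ring
  have hfin : (10 * j + 23) * A.card ≤ (8 * j + 2) * A.card := by
    have h8 : 2 * (4 * j * A.card + A.card) = (8 * j + 2) * A.card := by ring
    calc (10 * j + 23) * A.card
        ≤ ∑ b ∈ B, (A.filter fun u => G.Adj b u).card := hq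
      _ ≤ 2 * ((∑ u ∈ C, (A.filter fun z => G.Adj u z).card)
            + (A.filter fun u => G.Adj y u).card) := hking
      _ ≤ 2 * (4 * j * A.card + A.card) := by omega
      _ = (8 * j + 2) * A.card := h8
  have hcon : 10 * j + 23 ≤ 8 * j + 2 := Nat.le_of_mul_le_mul_right hfin (by omega)
  omega

theorem stmt_5 {V : Type*} [Fintype V] (k : ℕ) (hk : 1 ≤ k)
    (G : SimpleGraph V) (r : V → V → Prop) (hr : IsTournament r)
    (hdeg : 12 * k ≤ degeneracy G) :
    ∃ x y : V, k - 1 ≤ degeneracy (G.induce {u | r x u ∨ r y u}) := by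
  have hWex : ∃ W : Finset V, W.Nonempty ∧ ∀ v ∈ W, 12 * k ≤ (W.filter fun u => G.Adj v u).card := by
    by_contra hc
    push_neg at hc
    have hmem : (12 * k - 1) ∈ {d : ℕ | ∀ W : Finset V, W.Nonempty →
        ∃ v ∈ W, (W.filter fun u => G.Adj v u).card ≤ d} := by
      intro W hWne
      rcases W.eq_empty_or_nonempty with rfl | hne
      · exact absurd hWne (by simp)
      obtain ⟨v, hv, hlt⟩ := hc W hne
      exact ⟨v, hv, by omega⟩
    have hle := Nat.sInf_le hmem
    have : degeneracy G ≤ 12 * k - 1 := hle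
    omega
  obtain ⟨W, hWne, hW⟩ := hWex
  rcases Nat.lt_or_ge k 2 with hk2 | hk2
  · obtain ⟨v, _⟩ := hWne
    refine ⟨v, v, ?_⟩
    have hz : k - 1 = 0 := by omega
    rw [hz]
    exact Nat.zero_le _
  · obtain ⟨j, rfl⟩ : ∃ j, k = j + 2 := ⟨k - 2, by omega⟩
    obtain ⟨x, y, P, hPne, hPmem, hPdeg⟩ := core j G r hr W hWne hW
    refine ⟨x, y, ?_⟩
    set S : Set V := {u | r x u ∨ r y u} with hSdef
    show j + 2 - 1 ≤ degeneracy (G.induce S)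
    unfold degeneracy
    apply le_csInf
    · refine ⟨Fintype.card ↥S, fun Wf hWf => ?_⟩
      obtain ⟨v0, hv0⟩ := hWf
      refine ⟨v0, hv0, ?_⟩
      calc (Wf.filter fun u => (G.induce S).Adj v0 u).card
          ≤ Wf.card := Finset.card_le_card (Finset.filter_subset _ _)
        _ ≤ Fintype.card ↥S := Finset.card_le_univ _
    · intro d hd
      by_contra hdk
      push_neg at hdk
      set P' : Finset ↥S := P.subtype (· ∈ S) with hP'
      have hP'ne : P'.Nonempty := by
        obtain ⟨v, hv⟩ := hPne
        exact ⟨⟨v, hPmem v hv⟩, by simp [hP', Finset.mem_subtype, hv]⟩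
      obtain ⟨v', hv', hdeg'⟩ := hd P' hP'ne
      have hvP : (v' : V) ∈ P := Finset.mem_subtype.1 hv'
      have hcard : (P'.filter fun u => (G.induce S).Adj v' u).card
          = (P.filter fun u => G.Adj (v' : V) u).card := by
        apply Finset.card_bij (fun (u : ↥S) _ => (u : V))
        · intro u hu
          rcases Finset.mem_filter.1 hu with ⟨hu1, hu2⟩
          exact Finset.mem_filter.2 ⟨Finset.mem_subtype.1 hu1, hu2⟩
        · intro u1 _ u2 _ h
          exact Subtype.ext h
        · intro u hu
          rcases Finset.mem_filter.1 hu with ⟨hu1, hu2⟩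
          exact ⟨⟨u, hPmem u hu1⟩, Finset.mem_filter.2 ⟨Finset.mem_subtype.2 hu1, hu2⟩, rfl⟩
      have := hPdeg (v' : V) hvP
      have hdeg'' : (P.filter fun u => G.Adj (v' : V) u).card ≤ d := by
        rw [← hcard]; convert hdeg' using 3
      omega
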